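/- Let N ∈ ℕ, W ∈ (0, 1/2), and let V ∈ ℂ^{(N−2⌊NW⌋−1)×R} have orthonormal columns, R ≤ N−2⌊NW⌋−1. Let ε ∈ (0, 1/2) and K ∈ {1,…,N} satisfy λ^{(K−1)} ≥ ε, and set η = ‖F̄_{N,W}*B_{N,W} − V V* F̄_{N,W}* B_{N,W}‖ / ε (spectral norm). Then Q = [F_{N,W} F̄_{N,W} V] satisfies: (a) ‖S_K S_K* − QQ* S_K S_K*‖² ≤ η; (b) ‖s^{(ℓ)} − QQ* s^{(ℓ)}‖₂² ≤ η for all ℓ = 0,…,K−1; and (c) every unit vector s in the column space of S_K satisfies ‖QQ*s‖₂² ≥ 1 − Nη. -/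

import Mathlib

open Matrix
open scoped Real

noncomputable section

/-- The prolate matrix `B_{N,W}`. -/
def prolateR (N : ℕ) (W : ℝ) : Matrix (Fin N) (Fin N) ℝ :=
  Matrix.of fun m n : Fin N =>
    if m = n then 2 * W
    else Real.sin (2 * Real.pi * W * (((m : ℕ) : ℝ) - ((n : ℕ) : ℝ))) /
      (Real.pi * (((m : ℕ) : ℝ) - ((n : ℕ) : ℝ)))

def prolateC (N : ℕ) (W : ℝ) : Matrix (Fin N) (Fin N) ℂ :=
  (prolateR N W).map (fun x => (x : ℂ))

/-- partial DFT matrix with columns `(1/√N) e_{k/N}`, `|k| ≤ m`. -/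
def Fmat (N m : ℕ) : Matrix (Fin N) (Fin (2 * m + 1)) ℂ :=
  Matrix.of fun n i =>
    ((1 / Real.sqrt N : ℝ) : ℂ) *
      Complex.exp (2 * (Real.pi : ℂ) * Complex.I * ((((i : ℕ) : ℤ) - (m : ℤ) : ℤ) : ℂ) *
        ((n : ℕ) : ℂ) / (N : ℂ))

/-- remaining (high-frequency) DFT columns, frequencies `k/N` with `k = m+1, …, N−m−1`. -/
def Fbar (N m : ℕ) : Matrix (Fin N) (Fin (N - (2 * m + 1))) ℂ :=
  Matrix.of fun n j =>
    ((1 / Real.sqrt N : ℝ) : ℂ) *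
      Complex.exp (2 * (Real.pi : ℂ) * Complex.I * (((j : ℕ) + m + 1 : ℕ) : ℂ) *
        ((n : ℕ) : ℂ) / (N : ℂ))

/-- spectral (ℓ₂ operator) norm of a matrix. -/
def specNorm {M P : ℕ} (A : Matrix (Fin M) (Fin P) ℂ) : ℝ :=
  ‖LinearMap.toContinuousLinearMap (Matrix.toEuclideanLin A)‖

open scoped Matrix.Norms.L2Operator

/-! ### auxiliary lemmas -/

lemma specNorm_eq {M P : ℕ} (A : Matrix (Fin M) (Fin P) ℂ) : specNorm A = ‖A‖ := rfl

/-- Euclidean norm of a plain vector. -/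
def en {n : ℕ} (x : Fin n → ℂ) : ℝ := ‖(WithLp.equiv 2 (Fin n → ℂ)).symm x‖

lemma en_eq {n : ℕ} (x : Fin n → ℂ) : en x = Real.sqrt (∑ i, ‖x i‖ ^ 2) := by
  rw [en, EuclideanSpace.norm_eq]
  simp

lemma en_nonneg {n : ℕ} (x : Fin n → ℂ) : 0 ≤ en x := norm_nonneg _

lemma en_sq {n : ℕ} (x : Fin n → ℂ) : en x ^ 2 = ∑ i, ‖x i‖ ^ 2 := by
  rw [en_eq, Real.sq_sqrt]; positivity

lemma en_mulVec_le {m n : ℕ} (A : Matrix (Fin m) (Fin n) ℂ) (x : Fin n → ℂ) :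
    en (A *ᵥ x) ≤ ‖A‖ * en x :=
  A.l2_opNorm_mulVec ((WithLp.equiv 2 (Fin n → ℂ)).symm x)

lemma norm_le_of_en {m n : ℕ} (A : Matrix (Fin m) (Fin n) ℂ) (c : ℝ) (hc : 0 ≤ c)
    (h : ∀ x, en (A *ᵥ x) ≤ c * en x) : ‖A‖ ≤ c := by
  rw [Matrix.l2_opNorm_def]
  exact ContinuousLinearMap.opNorm_le_bound _ hc fun x => h ((WithLp.equiv 2 (Fin n → ℂ)) x)

lemma en_smul {n : ℕ} (c : ℂ) (x : Fin n → ℂ) : en (c • x) = ‖c‖ * en x := by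
  rw [en, en, ← norm_smul]; congr 1

lemma sumsq_eq_re {n : ℕ} (x : Fin n → ℂ) :
    (∑ i, ‖x i‖ ^ 2 : ℝ) = (star x ⬝ᵥ x).re := by
  simp only [dotProduct, Pi.star_apply, Complex.re_sum]
  congr 1; ext i
  rw [Complex.star_def, mul_comm, Complex.mul_conj]
  simp [Complex.sq_norm]

lemma sumsq_mulVec {m n : ℕ} (A : Matrix (Fin m) (Fin n) ℂ) (x : Fin n → ℂ) :
    (∑ i, ‖(A *ᵥ x) i‖ ^ 2 : ℝ) = (star x ᵥ* (Aᴴ * A) ⬝ᵥ x).re := by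
  rw [sumsq_eq_re, Matrix.star_mulVec, Matrix.dotProduct_mulVec, Matrix.vecMul_vecMul]

lemma sumsq_isometry {m n : ℕ} (A : Matrix (Fin m) (Fin n) ℂ) (h : Aᴴ * A = 1) (x : Fin n → ℂ) :
    (∑ i, ‖(A *ᵥ x) i‖ ^ 2 : ℝ) = ∑ i, ‖x i‖ ^ 2 := by
  rw [sumsq_mulVec, h, Matrix.vecMul_one, sumsq_eq_re]

lemma proj_pyth {n : ℕ} (P : Matrix (Fin n) (Fin n) ℂ) (hH : Pᴴ = P) (hI : P * P = P)
    (x : Fin n → ℂ) :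
    (∑ i, ‖(P *ᵥ x) i‖ ^ 2 : ℝ) + ∑ i, ‖((1 - P) *ᵥ x) i‖ ^ 2 = ∑ i, ‖x i‖ ^ 2 := by
  have h1 : Pᴴ * P = P := by rw [hH, hI]
  have h2 : (1 - P)ᴴ * (1 - P) = 1 - P := by
    simp [Matrix.conjTranspose_sub, hH, Matrix.sub_mul, Matrix.mul_sub, hI]
  rw [sumsq_mulVec, sumsq_mulVec, h1, h2, sumsq_eq_re]
  have h3 : star x ᵥ* (1 - P) ⬝ᵥ x = star x ᵥ* 1 ⬝ᵥ x - star x ᵥ* P ⬝ᵥ x := by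
    rw [Matrix.vecMul_sub, sub_dotProduct]
  rw [h3, Matrix.vecMul_one]
  simp [Complex.sub_re]

lemma proj_sumsq_le {n : ℕ} (P : Matrix (Fin n) (Fin n) ℂ) (hH : Pᴴ = P) (hI : P * P = P)
    (x : Fin n → ℂ) :
    (∑ i, ‖(P *ᵥ x) i‖ ^ 2 : ℝ) ≤ ∑ i, ‖x i‖ ^ 2 := by
  have := proj_pyth P hH hI x
  have h0 : (0:ℝ) ≤ ∑ i, ‖((1 - P) *ᵥ x) i‖ ^ 2 := by positivity
  linarith

lemma le_of_sq {a b : ℝ} (ha : 0 ≤ a) (hb : 0 ≤ b) (h : a ^ 2 ≤ b ^ 2) : a ≤ b := by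
  nlinarith

lemma en_proj_le {n : ℕ} (P : Matrix (Fin n) (Fin n) ℂ) (hH : Pᴴ = P) (hI : P * P = P)
    (x : Fin n → ℂ) : en (P *ᵥ x) ≤ en x := by
  apply le_of_sq (en_nonneg _) (en_nonneg _)
  rw [en_sq, en_sq]
  exact proj_sumsq_le P hH hI x

lemma norm_proj_le {n : ℕ} (P : Matrix (Fin n) (Fin n) ℂ) (hH : Pᴴ = P) (hI : P * P = P) :
    ‖P‖ ≤ 1 := by
  apply norm_le_of_en _ _ zero_le_one
  intro x
  rw [one_mul]
  exact en_proj_le P hH hI x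

lemma en_isometry {m n : ℕ} (A : Matrix (Fin m) (Fin n) ℂ) (h : Aᴴ * A = 1) (x : Fin n → ℂ) :
    en (A *ᵥ x) = en x := by
  rw [en_eq, en_eq, sumsq_isometry A h]

lemma norm_iso_le {m n : ℕ} (A : Matrix (Fin m) (Fin n) ℂ) (h : Aᴴ * A = 1) : ‖A‖ ≤ 1 := by
  apply norm_le_of_en _ _ zero_le_one
  intro x
  rw [one_mul, en_isometry A h]

lemma norm_diag_le {n : ℕ} (d : Fin n → ℂ) (c : ℝ) (hc : 0 ≤ c) (h : ∀ i, ‖d i‖ ≤ c) :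
    ‖(Matrix.diagonal d : Matrix (Fin n) (Fin n) ℂ)‖ ≤ c := by
  apply norm_le_of_en _ _ hc
  intro x
  apply le_of_sq (en_nonneg _) (mul_nonneg hc (en_nonneg _))
  rw [mul_pow, en_sq, en_sq, Finset.mul_sum]
  apply Finset.sum_le_sum
  intro i _
  rw [Matrix.mulVec_diagonal, norm_mul, mul_pow]
  have h1 : ‖d i‖ ^ 2 ≤ c ^ 2 := by nlinarith [norm_nonneg (d i), h i]
  nlinarith [norm_nonneg (x i), sq_nonneg (x i : ℂ).re]

lemma sum_exp_eq (N : ℕ) (hN : 0 < N) (t : ℤ) :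
    ∑ n : Fin N, Complex.exp (2 * (Real.pi : ℂ) * Complex.I * (t : ℂ) * (n : ℕ) / N) =
      if (N : ℤ) ∣ t then (N : ℂ) else 0 := by
  have hNC : (N : ℂ) ≠ 0 := Nat.cast_ne_zero.mpr hN.ne'
  set z : ℂ := Complex.exp (2 * (Real.pi : ℂ) * Complex.I * (t : ℂ) / N) with hz
  have hpow : ∀ n : ℕ,
      Complex.exp (2 * (Real.pi : ℂ) * Complex.I * (t : ℂ) * (n : ℕ) / N) = z ^ n := by
    intro n
    rw [hz, ← Complex.exp_nat_mul]
    congr 1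
    field_simp
  simp only [hpow]
  by_cases hd : (N : ℤ) ∣ t
  · obtain ⟨k, hk⟩ := hd
    have hz1 : z = 1 := by
      rw [hz, hk]
      have h2 : 2 * (Real.pi : ℂ) * Complex.I * (((N : ℤ) * k : ℤ) : ℂ) / N =
          (k : ℂ) * (2 * Real.pi * Complex.I) := by
        push_cast
        field_simp
      rw [h2]
      exact Complex.exp_int_mul_two_pi_mul_I k
    simp only [hz1, one_pow, Finset.sum_const, Finset.card_univ, Fintype.card_fin, nsmul_eq_mul,
      mul_one]
    rw [if_pos ⟨k, hk⟩]
  · have hz1 : z ≠ 1 := by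
      intro h
      rw [hz] at h
      rw [Complex.exp_eq_one_iff] at h
      obtain ⟨k, hk⟩ := h
      apply hd
      refine ⟨k, ?_⟩
      have h2 : (2 * (Real.pi : ℂ) * Complex.I) ≠ 0 := by
        simp [Real.pi_ne_zero, Complex.I_ne_zero, Complex.ofReal_ne_zero]
      have h3 : (t : ℂ) = (N : ℂ) * k := by
        field_simp at hk
        apply mul_left_cancel₀ h2
        rw [hk]
      exact_mod_cast h3
    have hzN : z ^ N = 1 := by
      rw [hz, ← Complex.exp_nat_mul]
      have h4 : (N : ℂ) * (2 * (Real.pi : ℂ) * Complex.I * (t : ℂ) / N) =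
          (t : ℂ) * (2 * Real.pi * Complex.I) := by field_simp
      rw [h4]
      exact Complex.exp_int_mul_two_pi_mul_I t
    rw [if_neg hd]
    rw [Fin.sum_univ_eq_sum_range (fun n => z ^ n), geom_sum_eq hz1, hzN]
    simp

lemma dft_dot (N : ℕ) (hN : 0 < N) (k k' : ℤ) :
    ∑ n : Fin N, (starRingEnd ℂ)
        (((1 / Real.sqrt N : ℝ) : ℂ) *
          Complex.exp (2 * (Real.pi : ℂ) * Complex.I * (k : ℂ) * ((n : ℕ) : ℂ) / N)) *
        (((1 / Real.sqrt N : ℝ) : ℂ) *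
          Complex.exp (2 * (Real.pi : ℂ) * Complex.I * (k' : ℂ) * ((n : ℕ) : ℂ) / N))
      = if (N : ℤ) ∣ (k' - k) then 1 else 0 := by
  have hNC : (N : ℂ) ≠ 0 := Nat.cast_ne_zero.mpr hN.ne'
  have hNR : (0:ℝ) < N := Nat.cast_pos.mpr hN
  have hc : ((1 / Real.sqrt N : ℝ) : ℂ) * ((1 / Real.sqrt N : ℝ) : ℂ) = 1 / (N : ℂ) := by
    rw [← Complex.ofReal_mul]
    rw [show (1 / Real.sqrt N) * (1 / Real.sqrt N) = 1 / (Real.sqrt N * Real.sqrt N) by ring]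
    rw [Real.mul_self_sqrt hNR.le]
    push_cast; ring
  have hsum : ∀ n : Fin N,
      (starRingEnd ℂ)
        (((1 / Real.sqrt N : ℝ) : ℂ) *
          Complex.exp (2 * (Real.pi : ℂ) * Complex.I * (k : ℂ) * ((n : ℕ) : ℂ) / N)) *
        (((1 / Real.sqrt N : ℝ) : ℂ) *
          Complex.exp (2 * (Real.pi : ℂ) * Complex.I * (k' : ℂ) * ((n : ℕ) : ℂ) / N))
      = (1 / (N : ℂ)) *
          Complex.exp (2 * (Real.pi : ℂ) * Complex.I * ((k' - k : ℤ) : ℂ) * ((n : ℕ) : ℂ) / N) := by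
    intro n
    rw [_root_.map_mul, ← Complex.exp_conj]
    have hconj : (starRingEnd ℂ) (2 * (Real.pi : ℂ) * Complex.I * (k : ℂ) * ((n : ℕ) : ℂ) / N)
        = -(2 * (Real.pi : ℂ) * Complex.I * (k : ℂ) * ((n : ℕ) : ℂ) / N) := by
      simp [map_div₀, _root_.map_mul, map_ofNat, Complex.conj_I, Complex.conj_ofReal]
      ring
    rw [hconj, Complex.conj_ofReal]
    rw [show ((1 / Real.sqrt N : ℝ) : ℂ) *
        Complex.exp (-(2 * (Real.pi : ℂ) * Complex.I * (k : ℂ) * ((n : ℕ) : ℂ) / N)) *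
        (((1 / Real.sqrt N : ℝ) : ℂ) *
          Complex.exp (2 * (Real.pi : ℂ) * Complex.I * (k' : ℂ) * ((n : ℕ) : ℂ) / N))
      = (((1 / Real.sqrt N : ℝ) : ℂ) * ((1 / Real.sqrt N : ℝ) : ℂ)) *
        (Complex.exp (-(2 * (Real.pi : ℂ) * Complex.I * (k : ℂ) * ((n : ℕ) : ℂ) / N)) *
         Complex.exp (2 * (Real.pi : ℂ) * Complex.I * (k' : ℂ) * ((n : ℕ) : ℂ) / N)) from by ring]
    rw [hc, ← Complex.exp_add]
    congr 1
    push_cast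
    ring
  rw [Finset.sum_congr rfl (fun n _ => hsum n), ← Finset.mul_sum, sum_exp_eq N hN (k' - k)]
  by_cases hd : (N : ℤ) ∣ (k' - k)
  · rw [if_pos hd, if_pos hd]
    field_simp
  · rw [if_neg hd, if_neg hd, mul_zero]

lemma dvd_eq_zero_of_abs_lt {N : ℕ} {t : ℤ} (hd : (N : ℤ) ∣ t) (h : |t| < N) : t = 0 := by
  by_contra h0
  have h1 : (N : ℤ) ∣ |t| := (dvd_abs _ _).mpr hd
  have h2 : (N : ℤ) ≤ |t| := Int.le_of_dvd (abs_pos.mpr h0) h1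
  omega

section DFT
variable {N m : ℕ}

lemma Fbar_col (n : Fin N) (j : Fin (N - (2 * m + 1))) :
    Fbar N m n j = ((1 / Real.sqrt N : ℝ) : ℂ) *
      Complex.exp (2 * (Real.pi : ℂ) * Complex.I * ((((j : ℕ) + m + 1 : ℕ) : ℤ) : ℂ) *
        ((n : ℕ) : ℂ) / (N : ℂ)) := by
  simp only [Fbar, Matrix.of_apply]
  norm_cast

lemma FmatH_Fmat (h : 2 * m + 1 ≤ N) : (Fmat N m)ᴴ * Fmat N m = 1 := by
  have hN : 0 < N := by omega
  ext i i'
  rw [Matrix.mul_apply]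
  simp only [Matrix.conjTranspose_apply, Complex.star_def]
  calc ∑ n, (starRingEnd ℂ) (Fmat N m n i) * Fmat N m n i'
      = if (N : ℤ) ∣ (((i' : ℕ) : ℤ) - m - (((i : ℕ) : ℤ) - m)) then 1 else 0 := by
        simp only [Fmat, Matrix.of_apply]
        exact dft_dot N hN _ _
    _ = (1 : Matrix (Fin (2*m+1)) (Fin (2*m+1)) ℂ) i i' := by
        by_cases hd : (N : ℤ) ∣ (((i' : ℕ) : ℤ) - m - (((i : ℕ) : ℤ) - m))
        · have h0 : (((i' : ℕ) : ℤ) - m - (((i : ℕ) : ℤ) - m)) = 0 := by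
            apply dvd_eq_zero_of_abs_lt hd
            rw [abs_lt]
            have := i.isLt; have := i'.isLt
            constructor <;> push_cast <;> omega
          have he : i = i' := by
            apply Fin.ext
            omega
          rw [if_pos hd, Matrix.one_apply, if_pos he]
        · have he : ¬ i = i' := by
            intro he; apply hd; rw [he]; simp
          rw [if_neg hd, Matrix.one_apply, if_neg he]

lemma FbarH_Fbar (h : 2 * m + 1 ≤ N) : (Fbar N m)ᴴ * Fbar N m = 1 := by
  have hN : 0 < N := by omega
  ext j j'
  rw [Matrix.mul_apply]
  simp only [Matrix.conjTranspose_apply, Complex.star_def]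
  calc ∑ n, (starRingEnd ℂ) (Fbar N m n j) * Fbar N m n j'
      = if (N : ℤ) ∣ ((((j' : ℕ) + m + 1 : ℕ) : ℤ) - (((j : ℕ) + m + 1 : ℕ) : ℤ)) then 1 else 0 := by
        simp only [Fbar_col]
        exact dft_dot N hN _ _
    _ = (1 : Matrix (Fin (N - (2*m+1))) (Fin (N - (2*m+1))) ℂ) j j' := by
        by_cases hd : (N : ℤ) ∣ ((((j' : ℕ) + m + 1 : ℕ) : ℤ) - (((j : ℕ) + m + 1 : ℕ) : ℤ))
        · have h0 : ((((j' : ℕ) + m + 1 : ℕ) : ℤ) - (((j : ℕ) + m + 1 : ℕ) : ℤ)) = 0 := by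
            apply dvd_eq_zero_of_abs_lt hd
            rw [abs_lt]
            have := j.isLt; have := j'.isLt
            constructor <;> push_cast <;> omega
          have he : j = j' := by
            apply Fin.ext
            push_cast at h0
            omega
          rw [if_pos hd, Matrix.one_apply, if_pos he]
        · have he : ¬ j = j' := by
            intro he; apply hd; rw [he]; simp
          rw [if_neg hd, Matrix.one_apply, if_neg he]

lemma FmatH_Fbar (h : 2 * m + 1 ≤ N) : (Fmat N m)ᴴ * Fbar N m = 0 := by
  have hN : 0 < N := by omega
  ext i j
  rw [Matrix.mul_apply]
  simp only [Matrix.conjTranspose_apply, Complex.star_def]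
  calc ∑ n, (starRingEnd ℂ) (Fmat N m n i) * Fbar N m n j
      = if (N : ℤ) ∣ ((((j : ℕ) + m + 1 : ℕ) : ℤ) - (((i : ℕ) : ℤ) - m)) then 1 else 0 := by
        simp only [Fmat, Matrix.of_apply, Fbar_col]
        exact dft_dot N hN _ _
    _ = 0 := by
        rw [if_neg]
        intro hd
        have h0 : ((((j : ℕ) + m + 1 : ℕ) : ℤ) - (((i : ℕ) : ℤ) - m)) = 0 := by
          apply dvd_eq_zero_of_abs_lt hd
          rw [abs_lt]
          have := i.isLt; have := j.isLt
          constructor <;> push_cast <;> omega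
        have := i.isLt
        push_cast at h0
        omega

lemma completeness (h : 2 * m + 1 ≤ N) :
    Fmat N m * (Fmat N m)ᴴ + Fbar N m * (Fbar N m)ᴴ = 1 := by
  have hsum : 2 * m + 1 + (N - (2 * m + 1)) = N := by omega
  set G := Matrix.fromCols (Fmat N m) (Fbar N m) with hG
  have hG1 : Gᴴ * G = 1 := by
    rw [hG, Matrix.conjTranspose_fromCols_eq_fromRows_conjTranspose,
      Matrix.fromRows_mul_fromCols, FmatH_Fmat h, FbarH_Fbar h, FmatH_Fbar h]
    have h2 : (Fbar N m)ᴴ * Fmat N m = 0 := by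
      have := congrArg Matrix.conjTranspose (FmatH_Fbar h)
      rwa [Matrix.conjTranspose_mul, Matrix.conjTranspose_conjTranspose,
        Matrix.conjTranspose_zero] at this
    rw [h2, Matrix.fromBlocks_one]
  have e : Fin N ≃ Fin (2 * m + 1) ⊕ Fin (N - (2 * m + 1)) :=
    (finCongr hsum.symm).trans finSumFinEquiv.symm
  have hGG : G * Gᴴ = 1 := (Matrix.mul_eq_one_comm_of_equiv e).mpr hG1
  rw [hG, Matrix.conjTranspose_fromCols_eq_fromRows_conjTranspose,
    Matrix.fromCols_mul_fromRows] at hGG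
  exact hGG

end DFT


set_option maxHeartbeats 1000000 in
/-- with `η = ‖F̄*B − V V* F̄*B‖/ε` and `Q = [F  F̄ V]`:
(a) `‖S_K S_K* − QQ* S_K S_K*‖² ≤ η`;
(b) `‖s^{(ℓ)} − QQ* s^{(ℓ)}‖₂² ≤ η` for `ℓ < K`;
(c) every unit vector `s` in the column space of `S_K` has `‖QQ*s‖₂² ≥ 1 − Nη`. -/
theorem stmt10 (N : ℕ) (W : ℝ) (hW : W ∈ Set.Ioo (0 : ℝ) (1 / 2))
    (m : ℕ) (hm : m = ⌊(N : ℝ) * W⌋₊)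
    (lam : Fin N → ℝ) (S : Matrix (Fin N) (Fin N) ℝ)
    (hOrth : Sᵀ * S = 1)
    (hEig : prolateR N W * S = S * Matrix.diagonal lam)
    (hAnti : StrictAnti lam)
    (hPos : ∀ ℓ, 0 < lam ℓ) (hLtOne : ∀ ℓ, lam ℓ < 1)
    (R : ℕ) (hR : R ≤ N - (2 * m + 1))
    (V : Matrix (Fin (N - (2 * m + 1))) (Fin R) ℂ) (hV : Vᴴ * V = 1)
    (ε : ℝ) (hε : ε ∈ Set.Ioo (0 : ℝ) (1 / 2))
    (K : ℕ) (hK1 : 1 ≤ K) (hKN : K ≤ N)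
    (hlamK : ε ≤ lam ⟨K - 1, by omega⟩) :
    (specNorm
        ((S.map (fun x => (x : ℂ))).submatrix id (Fin.castLE hKN) *
            ((S.map (fun x => (x : ℂ))).submatrix id (Fin.castLE hKN))ᴴ -
          Matrix.fromCols (Fmat N m) (Fbar N m * V) *
            (Matrix.fromCols (Fmat N m) (Fbar N m * V))ᴴ *
            ((S.map (fun x => (x : ℂ))).submatrix id (Fin.castLE hKN) *
              ((S.map (fun x => (x : ℂ))).submatrix id (Fin.castLE hKN))ᴴ)) ^ 2
      ≤ specNorm ((Fbar N m)ᴴ * prolateC N W -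
          V * Vᴴ * ((Fbar N m)ᴴ * prolateC N W)) / ε) ∧
    (∀ ℓ : Fin N, (ℓ : ℕ) < K →
      ∑ n, ‖((fun n' => ((S n' ℓ : ℝ) : ℂ)) -
          (Matrix.fromCols (Fmat N m) (Fbar N m * V) *
            (Matrix.fromCols (Fmat N m) (Fbar N m * V))ᴴ).mulVec
              (fun n' => ((S n' ℓ : ℝ) : ℂ))) n‖ ^ 2
        ≤ specNorm ((Fbar N m)ᴴ * prolateC N W -
            V * Vᴴ * ((Fbar N m)ᴴ * prolateC N W)) / ε) ∧
    (∀ c : Fin K → ℂ,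
      (∑ n, ‖((S.map (fun x => (x : ℂ))).submatrix id (Fin.castLE hKN)).mulVec c n‖ ^ 2 = 1) →
      1 - N * (specNorm ((Fbar N m)ᴴ * prolateC N W -
          V * Vᴴ * ((Fbar N m)ᴴ * prolateC N W)) / ε)
        ≤ ∑ n, ‖(Matrix.fromCols (Fmat N m) (Fbar N m * V) *
            (Matrix.fromCols (Fmat N m) (Fbar N m * V))ᴴ).mulVec
              (((S.map (fun x => (x : ℂ))).submatrix id (Fin.castLE hKN)).mulVec c) n‖ ^ 2) := by
  obtain ⟨hW0, hW2⟩ := hW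
  obtain ⟨hε0, hε2⟩ := hε
  have hN : 0 < N := by omega
  -- 2m+1 ≤ N
  have hmN : 2 * m + 1 ≤ N := by
    have h1 : (m : ℝ) ≤ (N : ℝ) * W := by
      rw [hm]; exact Nat.floor_le (by positivity)
    have h2 : (N : ℝ) * W < (N : ℝ) * (1 / 2) := by
      apply mul_lt_mul_of_pos_left hW2
      exact_mod_cast hN
    have h3 : (2 * m : ℝ) < N := by linarith
    have h4 : (2 * m : ℕ) < N := by exact_mod_cast h3
    omega
  -- abbreviations
  set B := prolateC N W with hB
  set F := Fmat N m with hF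
  set Fb := Fbar N m with hFb
  set SC := S.map (fun x => (x : ℂ)) with hSC
  set f : Fin K → Fin N := Fin.castLE hKN with hf
  set SK := SC.submatrix id f with hSK
  set Q := Matrix.fromCols F (Fb * V) with hQ
  set P := Q * Qᴴ with hP
  set D := Fbᴴ * B - V * Vᴴ * (Fbᴴ * B) with hD
  set η := specNorm D / ε with hη
  rw [specNorm_eq] at hη
  -- basic orthogonality facts
  have hFF : Fᴴ * F = 1 := FmatH_Fmat hmN
  have hFbFb : Fbᴴ * Fb = 1 := FbarH_Fbar hmN
  have hFFb : Fᴴ * Fb = 0 := FmatH_Fbar hmN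
  have hFbF : Fbᴴ * F = 0 := by
    have := congrArg Matrix.conjTranspose hFFb
    rwa [Matrix.conjTranspose_mul, Matrix.conjTranspose_conjTranspose,
      Matrix.conjTranspose_zero] at this
  have hcomp : F * Fᴴ + Fb * Fbᴴ = 1 := completeness hmN
  -- Q has orthonormal columns
  have hQ1 : Qᴴ * Q = 1 := by
    rw [hQ, Matrix.conjTranspose_fromCols_eq_fromRows_conjTranspose,
      Matrix.fromRows_mul_fromCols]
    have e1 : Fᴴ * (Fb * V) = 0 := by rw [← Matrix.mul_assoc, hFFb, Matrix.zero_mul]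
    have e2 : (Fb * V)ᴴ * F = 0 := by
      rw [Matrix.conjTranspose_mul, Matrix.mul_assoc, hFbF, Matrix.mul_zero]
    have e3 : (Fb * V)ᴴ * (Fb * V) = 1 := by
      rw [Matrix.conjTranspose_mul, Matrix.mul_assoc, ← Matrix.mul_assoc Fbᴴ, hFbFb,
        Matrix.one_mul, hV]
    rw [hFF, e1, e2, e3, Matrix.fromBlocks_one]
  -- P is an orthogonal projection
  have hPH : Pᴴ = P := by
    rw [hP, Matrix.conjTranspose_mul, Matrix.conjTranspose_conjTranspose]
  have hPP : P * P = P := by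
    rw [hP, Matrix.mul_assoc, ← Matrix.mul_assoc Qᴴ, hQ1, Matrix.one_mul]
  have h1PH : (1 - P)ᴴ = 1 - P := by rw [Matrix.conjTranspose_sub, hPH, Matrix.conjTranspose_one]
  have h1PP : (1 - P) * (1 - P) = 1 - P := by
    simp [Matrix.sub_mul, Matrix.mul_sub, hPP]
  -- (1-P) * B = Fb * D
  have hkey : (1 - P) * B = Fb * D := by
    have hP' : P = F * Fᴴ + Fb * (V * Vᴴ) * Fbᴴ := by
      rw [hP, hQ, Matrix.conjTranspose_fromCols_eq_fromRows_conjTranspose,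
        Matrix.fromCols_mul_fromRows]
      congr 1
      rw [Matrix.conjTranspose_mul]
      simp only [Matrix.mul_assoc]
    have h1P : 1 - P = Fb * Fbᴴ - Fb * (V * Vᴴ) * Fbᴴ := by
      rw [hP', ← hcomp]; abel
    rw [h1P, hD]
    rw [Matrix.sub_mul, Matrix.mul_sub]
    congr 1
    · rw [Matrix.mul_assoc]
    · simp only [Matrix.mul_assoc]
  -- the complexified eigendecomposition
  have hEigC : B * SC = SC * Matrix.diagonal (fun i => (lam i : ℂ)) := by
    ext i j
    have h1 := congrFun (congrFun hEig i) j
    rw [Matrix.mul_diagonal, Matrix.mul_apply] at h1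
    rw [Matrix.mul_diagonal, Matrix.mul_apply]
    simp only [hB, prolateC, hSC, Matrix.map_apply]
    exact_mod_cast h1
  have hSC1 : SCᴴ * SC = 1 := by
    ext i j
    rw [Matrix.mul_apply]
    have h1 := congrFun (congrFun hOrth i) j
    rw [Matrix.mul_apply] at h1
    simp only [Matrix.transpose_apply] at h1
    simp only [hSC, Matrix.conjTranspose_apply, Matrix.map_apply, Complex.star_def,
      Complex.conj_ofReal]
    calc ∑ n, ((S n i : ℝ) : ℂ) * ((S n j : ℝ) : ℂ)
        = ((∑ n, S n i * S n j : ℝ) : ℂ) := by push_cast; rfl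
      _ = (((1 : Matrix (Fin N) (Fin N) ℝ) i j : ℝ) : ℂ) := by rw [h1]
      _ = (1 : Matrix (Fin N) (Fin N) ℂ) i j := by
          by_cases hij : i = j <;> simp [Matrix.one_apply, hij]
  have hSK1 : SKᴴ * SK = 1 := by
    rw [hSK, Matrix.conjTranspose_submatrix,
      ← Matrix.submatrix_mul SCᴴ SC f id f Function.bijective_id, hSC1]
    ext i j
    have hfinj : f i = f j ↔ i = j := by
      constructor
      · intro h
        have h2 := congrArg Fin.val h
        simp only [hf, Fin.coe_castLE] at h2
        exact Fin.ext h2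
      · intro h; rw [h]
    by_cases hij : i = j <;>
      simp [Matrix.submatrix_apply, Matrix.one_apply, hij, hfinj]
  -- eigenvalue bounds on the first K
  have hlam_f : ∀ k : Fin K, ε ≤ lam (f k) := by
    intro k
    have hle : f k ≤ (⟨K - 1, by omega⟩ : Fin N) := by
      rw [Fin.le_def]
      simp only [hf, Fin.coe_castLE]
      have := k.isLt; omega
    have := hAnti.antitone hle
    linarith
  -- diagonal matrices
  set Λ : Matrix (Fin K) (Fin K) ℂ := Matrix.diagonal (fun k => ((lam (f k) : ℝ) : ℂ)) with hΛ
  set Λi : Matrix (Fin K) (Fin K) ℂ := Matrix.diagonal (fun k => (((lam (f k))⁻¹ : ℝ) : ℂ)) with hΛi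
  have hΛΛi : Λ * Λi = 1 := by
    rw [hΛ, hΛi, Matrix.diagonal_mul_diagonal]
    have h9 : (fun k => ((lam (f k) : ℝ) : ℂ) * (((lam (f k))⁻¹ : ℝ) : ℂ)) =
        fun _ => (1 : ℂ) := by
      ext k
      rw [← Complex.ofReal_mul, mul_inv_cancel₀ (hPos (f k)).ne']
      simp
    rw [h9, Matrix.diagonal_one]
  -- B * SK = SK * Λ
  have hBSK : B * SK = SK * Λ := by
    rw [hΛ]
    ext n k
    have h1 := congrFun (congrFun hEigC n) (f k)
    rw [Matrix.mul_diagonal, Matrix.mul_apply] at h1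
    rw [Matrix.mul_diagonal, Matrix.mul_apply]
    simpa [hSK, Matrix.submatrix_apply] using h1
  have hSKrec : SK = B * SK * Λi := by
    rw [hBSK, Matrix.mul_assoc, hΛΛi, Matrix.mul_one]
  -- norm bounds
  have hd0 : (0:ℝ) ≤ ‖D‖ := norm_nonneg _
  have hη0 : 0 ≤ η := by rw [hη]; positivity
  have hFbn : ‖Fb‖ ≤ 1 := norm_iso_le Fb hFbFb
  have hSKn : ‖SK‖ ≤ 1 := norm_iso_le SK hSK1
  have hSKHn : ‖SKᴴ‖ ≤ 1 := by rw [Matrix.l2_opNorm_conjTranspose]; exact hSKn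
  have h1Pn : ‖(1 - P)‖ ≤ 1 := norm_proj_le _ h1PH h1PP
  have hΛin : ‖Λi‖ ≤ ε⁻¹ := by
    apply norm_diag_le _ _ (by positivity)
    intro k
    rw [Complex.norm_real, Real.norm_eq_abs, abs_of_pos (inv_pos.mpr (hPos (f k)))]
    exact inv_anti₀ hε0 (hlam_f k)
  have hPB : ‖(1 - P) * B‖ ≤ ‖D‖ := by
    rw [hkey]
    calc ‖Fb * D‖ ≤ ‖Fb‖ * ‖D‖ := Matrix.l2_opNorm_mul _ _
      _ ≤ 1 * ‖D‖ := by apply mul_le_mul_of_nonneg_right hFbn hd0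
      _ = ‖D‖ := one_mul _
  have hPSK : ‖(1 - P) * SK‖ ≤ η := by
    have h1 : (1 - P) * SK = ((1 - P) * B * SK) * Λi := by
      conv_lhs => rw [hSKrec]
      simp only [Matrix.mul_assoc]
    rw [h1]
    calc ‖((1 - P) * B * SK) * Λi‖ ≤ ‖(1 - P) * B * SK‖ * ‖Λi‖ := Matrix.l2_opNorm_mul _ _
      _ ≤ (‖(1 - P) * B‖ * ‖SK‖) * ‖Λi‖ := by
          apply mul_le_mul_of_nonneg_right (Matrix.l2_opNorm_mul _ _) (norm_nonneg _)
      _ ≤ (‖D‖ * 1) * ε⁻¹ := by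
          apply mul_le_mul
          · apply mul_le_mul hPB hSKn (norm_nonneg _) hd0
          · exact hΛin
          · exact norm_nonneg _
          · positivity
      _ = η := by rw [hη, mul_one, div_eq_mul_inv]
  refine ⟨?_, ?_, ?_⟩
  · -- part (a)
    rw [specNorm_eq]
    have hXeq : SK * SKᴴ - P * (SK * SKᴴ) = ((1 - P) * SK) * SKᴴ := by
      simp only [Matrix.sub_mul, Matrix.one_mul, Matrix.mul_assoc]
    have hXη : ‖SK * SKᴴ - P * (SK * SKᴴ)‖ ≤ η := by
      rw [hXeq]
      calc ‖((1 - P) * SK) * SKᴴ‖ ≤ ‖(1 - P) * SK‖ * ‖SKᴴ‖ := Matrix.l2_opNorm_mul _ _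
        _ ≤ η * 1 := mul_le_mul hPSK hSKHn (norm_nonneg _) hη0
        _ = η := mul_one _
    have hX1 : ‖SK * SKᴴ - P * (SK * SKᴴ)‖ ≤ 1 := by
      have h2 : SK * SKᴴ - P * (SK * SKᴴ) = (1 - P) * (SK * SKᴴ) := by
        simp only [Matrix.sub_mul, Matrix.one_mul]
      rw [h2]
      calc ‖(1 - P) * (SK * SKᴴ)‖ ≤ ‖(1 - P)‖ * ‖SK * SKᴴ‖ := Matrix.l2_opNorm_mul _ _
        _ ≤ 1 * (‖SK‖ * ‖SKᴴ‖) := by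
            apply mul_le_mul h1Pn (Matrix.l2_opNorm_mul _ _) (norm_nonneg _) zero_le_one
        _ ≤ 1 * (1 * 1) := by
            apply mul_le_mul_of_nonneg_left _ zero_le_one
            exact mul_le_mul hSKn hSKHn (norm_nonneg _) zero_le_one
        _ = 1 := by ring
    calc ‖SK * SKᴴ - P * (SK * SKᴴ)‖ ^ 2
        = ‖SK * SKᴴ - P * (SK * SKᴴ)‖ * ‖SK * SKᴴ - P * (SK * SKᴴ)‖ := sq _
      _ ≤ η * 1 := mul_le_mul hXη hX1 (norm_nonneg _) hη0
      _ = η := mul_one _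
  · -- part (b)
    intro ℓ hℓ
    set s : Fin N → ℂ := fun n' => ((S n' ℓ : ℝ) : ℂ) with hs
    have hsum_eq : ∀ n, ‖(s - P *ᵥ s) n‖ ^ 2 = ‖((1 - P) *ᵥ s) n‖ ^ 2 := by
      intro n
      rw [Matrix.sub_mulVec, Matrix.one_mulVec]
    rw [Finset.sum_congr rfl (fun n _ => hsum_eq n)]
    -- B *ᵥ s = lam ℓ • s
    have hcol : B *ᵥ s = ((lam ℓ : ℝ) : ℂ) • s := by
      ext n
      have h1 := congrFun (congrFun hEigC n) ℓ
      rw [Matrix.mul_apply] at h1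
      simp only [Matrix.mul_diagonal] at h1
      simp only [Matrix.mulVec, dotProduct, Pi.smul_apply, smul_eq_mul, hs]
      simp only [hSC, Matrix.map_apply] at h1
      rw [h1]; ring
    have hlamℓ : ε ≤ lam ℓ := by
      have hle : ℓ ≤ (⟨K - 1, by omega⟩ : Fin N) := by
        rw [Fin.le_def]; simp only; omega
      have := hAnti.antitone hle
      linarith
    have hlamℓ0 : (0:ℝ) < lam ℓ := hPos ℓ
    have hsrec : s = (((lam ℓ)⁻¹ : ℝ) : ℂ) • (B *ᵥ s) := by
      rw [hcol, smul_smul, ← Complex.ofReal_mul, inv_mul_cancel₀ hlamℓ0.ne']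
      simp
    have hs1 : en s = 1 := by
      rw [en_eq]
      have h2 : ∀ n, ‖s n‖ ^ 2 = S n ℓ * S n ℓ := by
        intro n
        rw [hs]
        simp only [Complex.norm_real]
        rw [Real.norm_eq_abs, sq_abs]; ring
      rw [Finset.sum_congr rfl (fun n _ => h2 n)]
      have h3 := congrFun (congrFun hOrth ℓ) ℓ
      rw [Matrix.mul_apply] at h3
      simp only [Matrix.transpose_apply] at h3
      rw [h3, Matrix.one_apply_eq, Real.sqrt_one]
    have hb1 : en ((1 - P) *ᵥ s) ≤ 1 := by
      have h4 := en_proj_le (1 - P) h1PH h1PP s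
      rw [hs1] at h4; exact h4
    have hbη : en ((1 - P) *ᵥ s) ≤ η := by
      have h5 : (1 - P) *ᵥ s = (((lam ℓ)⁻¹ : ℝ) : ℂ) • (((1 - P) * B) *ᵥ s) := by
        conv_lhs => rw [hsrec]
        rw [Matrix.mulVec_smul, Matrix.mulVec_mulVec]
      rw [h5, en_smul]
      calc ‖((((lam ℓ)⁻¹ : ℝ)) : ℂ)‖ * en (((1 - P) * B) *ᵥ s)
          ≤ ε⁻¹ * (‖(1 - P) * B‖ * en s) := by
            apply mul_le_mul _ (en_mulVec_le _ _) (en_nonneg _) (by positivity)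
            rw [Complex.norm_real, Real.norm_eq_abs, abs_of_pos (inv_pos.mpr hlamℓ0)]
            exact inv_anti₀ hε0 hlamℓ
        _ ≤ ε⁻¹ * (‖D‖ * 1) := by
            apply mul_le_mul_of_nonneg_left _ (by positivity)
            rw [hs1]
            apply mul_le_mul_of_nonneg_right hPB (by norm_num)
        _ = η := by rw [hη, mul_one, div_eq_mul_inv]; ring
    have h6 : (∑ n, ‖((1 - P) *ᵥ s) n‖ ^ 2 : ℝ) = en ((1 - P) *ᵥ s) ^ 2 := (en_sq _).symm
    rw [h6]
    calc en ((1 - P) *ᵥ s) ^ 2 = en ((1 - P) *ᵥ s) * en ((1 - P) *ᵥ s) := sq _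
      _ ≤ η * 1 := mul_le_mul hbη hb1 (en_nonneg _) hη0
      _ = η := mul_one _
  · -- part (c)
    intro c hc
    set s : Fin N → ℂ := SK *ᵥ c with hs
    have hsum_s : (∑ n, ‖s n‖ ^ 2 : ℝ) = 1 := hc
    have hpy := proj_pyth P hPH hPP s
    have hb1 : (∑ i, ‖((1 - P) *ᵥ s) i‖ ^ 2 : ℝ) ≤ 1 := by
      have h0 : (0:ℝ) ≤ ∑ i, ‖(P *ᵥ s) i‖ ^ 2 := by positivity
      linarith
    have hcn' : (∑ i, ‖c i‖ ^ 2 : ℝ) = 1 := by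
      rw [← sumsq_isometry SK hSK1 c, ← hs]
      exact hsum_s
    have hcn : en c = 1 := by
      rw [en_eq, hcn', Real.sqrt_one]
    have hbη : en ((1 - P) *ᵥ s) ≤ η := by
      rw [hs, Matrix.mulVec_mulVec]
      calc en (((1 - P) * SK) *ᵥ c) ≤ ‖(1 - P) * SK‖ * en c := en_mulVec_le _ _
        _ ≤ η * 1 := by rw [hcn]; exact mul_le_mul_of_nonneg_right hPSK (by norm_num)
        _ = η := mul_one _
    have hNη : (1:ℝ) ≤ (N:ℝ) := by exact_mod_cast hN
    have h7 : (∑ i, ‖((1 - P) *ᵥ s) i‖ ^ 2 : ℝ) = en ((1 - P) *ᵥ s) ^ 2 := (en_sq _).symm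
    rw [h7] at hb1
    rw [hsum_s, h7] at hpy
    have hbnn : 0 ≤ en ((1 - P) *ᵥ s) := en_nonneg _
    obtain ⟨b, hb⟩ : ∃ b, en ((1 - P) *ᵥ s) = b := ⟨_, rfl⟩
    rw [hb] at hb1 hbη hbnn hpy
    have hble1 : b ≤ 1 := le_of_sq hbnn zero_le_one (by simpa using hb1)
    have h8 : b ^ 2 ≤ η := by
      calc b ^ 2 = b * b := sq b
        _ ≤ η * 1 := mul_le_mul hbη hble1 hbnn hη0
        _ = η := mul_one _
    have h9 : η ≤ (N : ℝ) * η := le_mul_of_one_le_left hη0 hNη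
    linarith [hpy, h8, h9]

end
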